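/- Let n, r be positive integers, λ ∈ Λ(n,r) with λ_n ≠ 0, and let m be a natural number with m ≤ λ_n. Define λ(n-1,m) = (λ_1, ..., λ_{n-1} + m, λ_n - m). Then J(λ) = { j ∈ J(λ(n-1,m)) : j ≥ l(λ) componentwise }. -/
import Mathlib


/-- The (0-indexed) row of position `ρ` in the basic tableau of shape `lam`. -/
noncomputable def rowOf (lam : ℕ → ℕ) (ρ : ℕ) : ℕ :=
  sInf {k : ℕ | ρ < ∑ i ∈ Finset.range (k + 1), lam i}

/-- `T_j^λ` is row-semistandard: entries are weakly increasing along each row. -/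
def RowSemistandard {r : ℕ} (lam : ℕ → ℕ) (j : Fin r → ℕ) : Prop :=
  ∀ ρ ρ' : Fin r, rowOf lam ρ.val = rowOf lam ρ'.val → ρ ≤ ρ' → j ρ ≤ j ρ'

lemma rowOf_le_iff (f : ℕ → ℕ) (ρ k t : ℕ) (ht : ρ < ∑ i ∈ Finset.range (t + 1), f i) :
    rowOf f ρ ≤ k ↔ ρ < ∑ i ∈ Finset.range (k + 1), f i := by
  constructor
  · intro h
    have hne : Set.Nonempty {k : ℕ | ρ < ∑ i ∈ Finset.range (k + 1), f i} := ⟨t, ht⟩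
    have hmem : ρ < ∑ i ∈ Finset.range (rowOf f ρ + 1), f i := Nat.sInf_mem hne
    exact lt_of_lt_of_le hmem
      (Finset.sum_le_sum_of_subset (Finset.range_subset_range.mpr (by omega)))
  · intro h
    exact Nat.sInf_le h

/-- If `λ_n ≠ 0` and `m ≤ λ_n` then
`J(λ) = { j ∈ J(λ(n-1,m)) : j ≥ l(λ) componentwise }`, where
`J(μ) = { j ∈ I(n,r) : j ≥ l(μ) and T_j^μ row-semistandard }` and
`λ(n-1,m) = (λ_1, …, λ_{n-1} + m, λ_n - m)` (everything written 0-indexed). -/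
theorem stmt_9 (n r : ℕ) (hn : 2 ≤ n) (hr : 0 < r)
    (lam : ℕ → ℕ) (hsupp : ∀ k, n ≤ k → lam k = 0)
    (hsum : ∑ k ∈ Finset.range n, lam k = r)
    (hlast : lam (n - 1) ≠ 0) (m : ℕ) (hm : m ≤ lam (n - 1)) :
    {j : Fin r → ℕ | (∀ ρ, j ρ < n) ∧ (∀ ρ, rowOf lam ρ.val ≤ j ρ) ∧
        RowSemistandard lam j} =
      {j : Fin r → ℕ |
        ((∀ ρ, j ρ < n) ∧
          (∀ ρ, rowOf (fun k => if k = n - 2 then lam (n - 2) + m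
            else if k = n - 1 then lam (n - 1) - m else lam k) ρ.val ≤ j ρ) ∧
          RowSemistandard (fun k => if k = n - 2 then lam (n - 2) + m
            else if k = n - 1 then lam (n - 1) - m else lam k) j) ∧
        (∀ ρ, rowOf lam ρ.val ≤ j ρ)} := by
  set lam' : ℕ → ℕ := fun k => if k = n - 2 then lam (n - 2) + m
    else if k = n - 1 then lam (n - 1) - m else lam k with hlam'
  have h21 : n - 2 ≠ n - 1 := by omega
  have key : ∀ k, (∑ i ∈ Finset.range (k + 1), lam' i) + (if n - 1 ≤ k then m else 0)
      = (∑ i ∈ Finset.range (k + 1), lam i) + (if n - 2 ≤ k then m else 0) := by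
    intro k
    have h1 : (if n - 1 ≤ k then m else 0)
        = ∑ i ∈ Finset.range (k + 1), if i = n - 1 then m else 0 := by
      rw [Finset.sum_ite_eq' (Finset.range (k + 1)) (n - 1) (fun _ => m)]
      simp [Nat.lt_succ_iff]
    have h2 : (if n - 2 ≤ k then m else 0)
        = ∑ i ∈ Finset.range (k + 1), if i = n - 2 then m else 0 := by
      rw [Finset.sum_ite_eq' (Finset.range (k + 1)) (n - 2) (fun _ => m)]
      simp [Nat.lt_succ_iff]
    rw [h1, h2, ← Finset.sum_add_distrib, ← Finset.sum_add_distrib]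
    refine Finset.sum_congr rfl fun i _ => ?_
    by_cases hi2 : i = n - 2
    · subst hi2
      have h : lam' (n - 2) = lam (n - 2) + m := by simp [hlam']
      rw [h, if_neg h21, if_pos rfl]
      omega
    · by_cases hi1 : i = n - 1
      · subst hi1
        have h : lam' (n - 1) = lam (n - 1) - m := by simp [hlam', Ne.symm h21]
        rw [h, if_pos rfl, if_neg (Ne.symm h21)]
        omega
      · have h : lam' i = lam i := by simp [hlam', hi2, hi1]
        rw [h, if_neg hi1, if_neg hi2]
  have hS'ge : ∀ k, ∑ i ∈ Finset.range (k + 1), lam i ≤ ∑ i ∈ Finset.range (k + 1), lam' i := by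
    intro k; have := key k; split_ifs at this <;> omega
  have hS'ne : ∀ k, ∑ i ∈ Finset.range (k + 1), lam' i ≠ ∑ i ∈ Finset.range (k + 1), lam i →
      k = n - 2 ∧ ∑ i ∈ Finset.range (k + 1), lam' i = (∑ i ∈ Finset.range (k + 1), lam i) + m := by
    intro k hne; have := key k; split_ifs at this <;> omega
  have hStop : ∑ i ∈ Finset.range (n - 1 + 1), lam i = r := by
    rw [show n - 1 + 1 = n by omega]; exact hsum
  have hS'top : ∑ i ∈ Finset.range (n - 1 + 1), lam' i = r := by
    have := key (n - 1); split_ifs at this <;> omega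
  have hchar : ∀ ρ : ℕ, ρ < r → ∀ k, rowOf lam ρ ≤ k ↔ ρ < ∑ i ∈ Finset.range (k + 1), lam i :=
    fun ρ hρ k => rowOf_le_iff lam ρ k (n - 1) (by rw [hStop]; exact hρ)
  have hchar' : ∀ ρ : ℕ, ρ < r → ∀ k, rowOf lam' ρ ≤ k ↔ ρ < ∑ i ∈ Finset.range (k + 1), lam' i :=
    fun ρ hρ k => rowOf_le_iff lam' ρ k (n - 1) (by rw [hS'top]; exact hρ)
  have hmono : ∀ ρ ρ' : ℕ, ρ ≤ ρ' → ρ' < r → rowOf lam ρ ≤ rowOf lam ρ' := by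
    intro ρ ρ' h hlt
    rw [hchar ρ (lt_of_le_of_lt h hlt) _]
    have := (hchar ρ' hlt (rowOf lam ρ')).mp le_rfl
    omega
  have hrowle : ∀ ρ : ℕ, ρ < r → rowOf lam' ρ ≤ rowOf lam ρ := by
    intro ρ hρ
    rw [hchar' ρ hρ]
    have h1 := (hchar ρ hρ (rowOf lam ρ)).mp le_rfl
    have h2 := hS'ge (rowOf lam ρ)
    omega
  have hSsucc : ∑ i ∈ Finset.range (n - 1 + 1), lam i
      = (∑ i ∈ Finset.range (n - 2 + 1), lam i) + lam (n - 1) := by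
    rw [show n - 1 = n - 2 + 1 by omega, Finset.sum_range_succ]
  have hdiff : ∀ ρ : ℕ, ρ < r →
      rowOf lam ρ = rowOf lam' ρ ∨ (rowOf lam' ρ = n - 2 ∧ rowOf lam ρ = n - 1) := by
    intro ρ hρ
    by_cases he : rowOf lam ρ ≤ rowOf lam' ρ
    · exact Or.inl (le_antisymm he (hrowle ρ hρ))
    · right
      push_neg at he
      have h1 : ρ < ∑ i ∈ Finset.range (rowOf lam' ρ + 1), lam' i :=
        (hchar' ρ hρ (rowOf lam' ρ)).mp le_rfl
      have h2 : ¬ (ρ < ∑ i ∈ Finset.range (rowOf lam' ρ + 1), lam i) := by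
        intro h; exact absurd ((hchar ρ hρ (rowOf lam' ρ)).mpr h) (not_le.mpr he)
      obtain ⟨hc2, heq⟩ := hS'ne (rowOf lam' ρ) (by omega)
      refine ⟨hc2, ?_⟩
      rw [hc2] at h1 heq
      have h3 : ρ < ∑ i ∈ Finset.range (n - 1 + 1), lam i := by
        rw [hSsucc]; omega
      have h4 : rowOf lam ρ ≤ n - 1 := (hchar ρ hρ (n - 1)).mpr h3
      omega
  ext j
  simp only [Set.mem_setOf_eq]
  constructor
  · rintro ⟨hbd, hge, hss⟩
    refine ⟨⟨hbd, fun ρ => le_trans (hrowle ρ.val ρ.isLt) (hge ρ), ?_⟩, hge⟩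
    intro ρ ρ' heq hle
    rcases hdiff ρ.val ρ.isLt with h1 | h1 <;> rcases hdiff ρ'.val ρ'.isLt with h2 | h2
    · exact hss ρ ρ' (by omega) hle
    · have hjρ := hbd ρ; have hjρ' := hge ρ'
      omega
    · have hmn := hmono ρ.val ρ'.val (Fin.le_def.mp hle) ρ'.isLt
      omega
    · exact hss ρ ρ' (by omega) hle
  · rintro ⟨⟨hbd, hge', hss'⟩, hge⟩
    refine ⟨hbd, hge, ?_⟩
    intro ρ ρ' heq hle
    rcases hdiff ρ.val ρ.isLt with h1 | h1 <;> rcases hdiff ρ'.val ρ'.isLt with h2 | h2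
    · exact hss' ρ ρ' (by omega) hle
    · have := hbd ρ; have := hge ρ; have := hge ρ'; omega
    · have := hbd ρ; have := hge ρ; have := hge ρ'; omega
    · have := hbd ρ; have := hge ρ; have := hge ρ'; omega
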